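/- (Wythoff's theorem.) The set of P-positions of Wythoff Nim equals {(⌊φn⌋, ⌊φ²n⌋) : n ∈ ℕ} ∪ {(⌊φ²n⌋, ⌊φn⌋) : n ∈ ℕ}, where φ := (1+√5)/2 is the golden ratio. -/

import Mathlib

/-- A legal move of Wythoff Nim: remove `t ≥ 1` tokens from one heap, or `t ≥ 1`
tokens from both heaps. -/
def wythoffMove (pos pos' : ℕ × ℕ) : Prop :=
  ∃ t : ℕ, 1 ≤ t ∧
    ((t ≤ pos.1 ∧ pos' = (pos.1 - t, pos.2)) ∨
     (t ≤ pos.2 ∧ pos' = (pos.1, pos.2 - t)) ∨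
     (t ≤ pos.1 ∧ t ≤ pos.2 ∧ pos' = (pos.1 - t, pos.2 - t)))

/-- `pos` is a P-position: every legal move leads to a non-P-position.  (Every legal
move strictly decreases the coordinate sum, which makes the recursion well-founded.) -/
def PPos (move : ℕ × ℕ → ℕ × ℕ → Prop) : ℕ × ℕ → Prop
  | pos => ∀ pos', move pos pos' → pos'.1 + pos'.2 < pos.1 + pos.2 → ¬ PPos move pos'
termination_by pos => pos.1 + pos.2

/-- The golden ratio `φ = (1+√5)/2`. -/
noncomputable def phi : ℝ := (1 + Real.sqrt 5) / 2

open Real goldenRatio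

noncomputable def wA (n : ℕ) : ℕ := ⌊phi * n⌋₊

lemma phi_eq : phi = goldenRatio := rfl

lemma phi_pos : (0:ℝ) < phi := phi_eq ▸ goldenRatio_pos

lemma wA_zero : wA 0 = 0 := by simp [wA]

lemma wB_eq (n : ℕ) : ⌊phi ^ 2 * n⌋₊ = wA n + n := by
  have h : phi ^ 2 * n = phi * n + n := by
    rw [phi_eq, goldenRatio_sq]; ring
  rw [h, Nat.floor_add_natCast (mul_nonneg phi_pos.le (Nat.cast_nonneg n)), wA]

lemma wA_strictMono : StrictMono wA := by
  intro m n hmn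
  have h1 : phi * m + 1 ≤ phi * n := by
    have hm : (m:ℝ) + 1 ≤ n := by exact_mod_cast hmn
    nlinarith [phi_eq ▸ one_lt_goldenRatio, show (0:ℝ) ≤ (m:ℝ) from Nat.cast_nonneg m]
  have : wA m + 1 ≤ wA n := by
    rw [wA, wA, ← Nat.floor_add_one (mul_nonneg phi_pos.le (Nat.cast_nonneg m))]
    exact Nat.floor_le_floor h1
  omega

lemma wA_le (n : ℕ) : n ≤ wA n := by
  rw [wA]
  refine Nat.le_floor ?_
  have := phi_eq ▸ one_lt_goldenRatio
  nlinarith [show (0:ℝ) ≤ (n:ℝ) from Nat.cast_nonneg n]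

/-- The key Beatty dichotomy for φ, φ². -/
lemma beatty_xor (j : ℕ) (hj : 0 < j) :
    ((∃ n, wA n = j) ∧ ¬(∃ n, wA n + n = j)) ∨
    ((∃ n, wA n + n = j) ∧ ¬(∃ n, wA n = j)) := by
  have hconj : goldenRatio.HolderConjugate (goldenRatio ^ 2) := by
    rw [Real.holderConjugate_iff]; constructor
    · exact one_lt_goldenRatio
    · have hs : Real.sqrt 5 ^ 2 = 5 := Real.sq_sqrt (by norm_num)
      have h0 : goldenRatio ≠ 0 := goldenRatio_ne_zero
      field_simp
      linear_combination (-1) * hs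
  have hsym := Irrational.beattySeq_symmDiff_beattySeq_pos hconj goldenRatio_irrational
  have hjZ : (j:ℤ) ∈ {n : ℤ | 0 < n} := by simpa using hj
  rw [← hsym, Set.mem_symmDiff] at hjZ
  have hcast : ∀ n : ℕ, ((wA n : ℤ)) = ⌊(n:ℝ) * goldenRatio⌋ := by
    intro n
    rw [wA, phi_eq, mul_comm, Int.natCast_floor_eq_floor (by positivity)]
  have hcast2 : ∀ n : ℕ, ((wA n + n : ℕ) : ℤ) = ⌊(n:ℝ) * goldenRatio ^ 2⌋ := by
    intro n
    have : ((⌊phi ^ 2 * n⌋₊ : ℕ) : ℤ) = ⌊(n:ℝ) * goldenRatio ^ 2⌋ := by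
      rw [phi_eq, mul_comm, Int.natCast_floor_eq_floor (by positivity)]
    rw [← this, wB_eq]
  -- translate memberships
  have hX : (j:ℤ) ∈ {x : ℤ | ∃ k > 0, beattySeq goldenRatio k = x} ↔ ∃ n, wA n = j := by
    constructor
    · rintro ⟨k, hk, hkj⟩
      refine ⟨k.toNat, ?_⟩
      have hkk : ((k.toNat : ℤ)) = k := Int.toNat_of_nonneg hk.le
      have hkR : ((k.toNat : ℕ) : ℝ) = (k : ℝ) := by exact_mod_cast congrArg (fun z : ℤ => (z : ℝ)) hkk
      have : ((wA k.toNat : ℤ)) = (j:ℤ) := by rw [hcast, hkR, ← hkj, beattySeq]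
      exact_mod_cast this
    · rintro ⟨n, hn⟩
      have hn0 : 0 < n := by
        rcases Nat.eq_zero_or_pos n with h | h
        · simp [h, wA_zero] at hn; omega
        · exact h
      refine ⟨n, by exact_mod_cast hn0, ?_⟩
      rw [beattySeq, show (((n:ℕ):ℤ):ℝ) = ((n:ℕ):ℝ) from by norm_cast, ← hcast n, hn]
  have hY : (j:ℤ) ∈ {x : ℤ | ∃ k > 0, beattySeq (goldenRatio ^ 2) k = x} ↔
      ∃ n, wA n + n = j := by
    constructor
    · rintro ⟨k, hk, hkj⟩
      refine ⟨k.toNat, ?_⟩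
      have hkk : ((k.toNat : ℤ)) = k := Int.toNat_of_nonneg hk.le
      have hkR : ((k.toNat : ℕ) : ℝ) = (k : ℝ) := by exact_mod_cast congrArg (fun z : ℤ => (z : ℝ)) hkk
      have : ((wA k.toNat + k.toNat : ℕ) : ℤ) = (j:ℤ) := by rw [hcast2, hkR, ← hkj, beattySeq]
      exact_mod_cast this
    · rintro ⟨n, hn⟩
      have hn0 : 0 < n := by
        rcases Nat.eq_zero_or_pos n with h | h
        · simp [h, wA_zero] at hn; omega
        · exact h
      refine ⟨n, by exact_mod_cast hn0, ?_⟩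
      rw [beattySeq, show (((n:ℕ):ℤ):ℝ) = ((n:ℕ):ℝ) from by norm_cast, ← hcast2 n, hn]
  rcases hjZ with ⟨h1, h2⟩ | ⟨h1, h2⟩
  · exact Or.inl ⟨hX.mp h1, fun h => h2 (hY.mpr h)⟩
  · exact Or.inr ⟨hY.mp h1, fun h => h2 (hX.mpr h)⟩

lemma wA_inj : Function.Injective wA := wA_strictMono.injective

lemma wdisj {m n : ℕ} (hn : 0 < n) : wA m ≠ wA n + n := by
  intro h
  have hj : 0 < wA n + n := by omega
  rcases beatty_xor (wA n + n) hj with ⟨_, h2⟩ | ⟨_, h2⟩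
  · exact h2 ⟨n, rfl⟩
  · exact h2 ⟨m, h⟩

/-- The conjectured P-position set. -/
def wS : Set (ℕ × ℕ) := {p | ∃ n, p = (wA n, wA n + n) ∨ p = (wA n + n, wA n)}

lemma wS_swap {x y : ℕ} (h : (x, y) ∈ wS) : (y, x) ∈ wS := by
  rcases h with ⟨n, h | h⟩
  · exact ⟨n, Or.inr (by simp_all)⟩
  · exact ⟨n, Or.inl (by simp_all)⟩

lemma move_swap {x y : ℕ} {p : ℕ × ℕ} (h : wythoffMove (x, y) p) :
    wythoffMove (y, x) (p.2, p.1) := by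
  obtain ⟨t, ht, h⟩ := h
  rcases h with ⟨h1, h2⟩ | ⟨h1, h2⟩ | ⟨h1, h1', h2⟩
  · exact ⟨t, ht, Or.inr (Or.inl ⟨h1, by simp [h2]⟩)⟩
  · exact ⟨t, ht, Or.inl ⟨h1, by simp [h2]⟩⟩
  · exact ⟨t, ht, Or.inr (Or.inr ⟨h1', h1, by simp [h2]⟩)⟩

lemma move_decreases {p q : ℕ × ℕ} (h : wythoffMove p q) : q.1 + q.2 < p.1 + p.2 := by
  obtain ⟨t, ht, h⟩ := h
  rcases h with ⟨h1, h2⟩ | ⟨h1, h2⟩ | ⟨h1, h1', h2⟩ <;> subst h2 <;> simp <;> omega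

/-- No move leads from an S-position of the form `(wA n, wA n + n)` to an S-position. -/
lemma no_move_core (n : ℕ) {q : ℕ × ℕ}
    (h : wythoffMove (wA n, wA n + n) q) : q ∉ wS := by
  rintro ⟨m, hm | hm⟩ <;> obtain ⟨t, ht, hmv⟩ := h <;>
    rcases hmv with ⟨h1, h2⟩ | ⟨h1, h2⟩ | ⟨h1, h1', h2⟩ <;>
      simp only [hm, Prod.mk.injEq] at h2 <;> simp only at h1 h2 ⊢
  -- case q = (wA m, wA m + m)
  · -- (wA n - t, wA n + n) = (wA m, wA m + m)
    obtain ⟨e1, e2⟩ := h2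
    have hmn : m = n := by
      have := wA_strictMono.injective
      have h3 : wA m < wA n := by omega
      have h4 : m < n := by
        by_contra hc
        push_neg at hc
        rcases eq_or_lt_of_le hc with h | h
        · omega
        · exact absurd (wA_strictMono h) (by omega)
      have := wA_strictMono h4
      omega
    subst hmn; omega
  · -- (wA n, wA n + n - t) = (wA m, wA m + m)
    obtain ⟨e1, e2⟩ := h2
    have hmn : m = n := wA_inj e1
    subst hmn; omega
  · -- diagonal
    obtain ⟨e1, e2⟩ := h2
    have hmn : m = n := by omega
    subst hmn; omega
  -- case q = (wA m + m, wA m)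
  · -- (wA n - t, wA n + n) = (wA m + m, wA m)
    obtain ⟨e1, e2⟩ := h2
    -- wA m = wA n + n
    rcases Nat.eq_zero_or_pos n with hn | hn
    · rw [hn, wA_zero] at h1; omega
    · exact wdisj hn e2
  · -- (wA n, wA n + n - t) = (wA m + m, wA m)
    obtain ⟨e1, e2⟩ := h2
    -- wA n = wA m + m
    rcases Nat.eq_zero_or_pos m with hm0 | hm0
    · rw [hm0, wA_zero] at e1
      have : n = 0 := by have := wA_le n; omega
      subst this; rw [wA_zero] at h1; omega
    · exact wdisj hm0 e1.symm
  · -- diagonal: (wA n - t, wA n + n - t) = (wA m + m, wA m)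
    obtain ⟨e1, e2⟩ := h2
    have hAm : wA m ≤ wA m + m := by omega
    rcases Nat.eq_zero_or_pos n with hn | hn
    · rw [hn, wA_zero] at h1; omega
    · omega

lemma no_move_S {p q : ℕ × ℕ} (hp : p ∈ wS) (h : wythoffMove p q) : q ∉ wS := by
  rcases hp with ⟨n, hp | hp⟩
  · exact no_move_core n (hp ▸ h)
  · intro hq
    have h' : wythoffMove (wA n + n, wA n) q := hp ▸ h
    have h2 := move_swap (x := wA n + n) (y := wA n) h'
    exact no_move_core n h2 (wS_swap (x := q.1) (y := q.2) hq)

/-- From any position not in S (with x ≤ y) there is a move into S. -/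
lemma move_into_core {x y : ℕ} (hxy : x ≤ y) (h : (x, y) ∉ wS) :
    ∃ q, wythoffMove (x, y) q ∧ q ∈ wS := by
  rcases Nat.eq_zero_or_pos x with hx | hx
  · subst hx
    have hy : 0 < y := by
      rcases Nat.eq_zero_or_pos y with h0 | h0
      · exact absurd ⟨0, Or.inl (by simp [h0, wA_zero])⟩ h
      · exact h0
    exact ⟨(0, 0), ⟨y, hy, Or.inr (Or.inl ⟨le_refl y, by simp⟩)⟩,
      ⟨0, Or.inl (by simp [wA_zero])⟩⟩
  · rcases beatty_xor x hx with ⟨⟨n, hn⟩, -⟩ | ⟨⟨n, hn⟩, -⟩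
    · -- x = wA n
      set d := y - x with hd
      rcases lt_trichotomy n d with hlt | heq | hgt
      · -- move second coordinate down to wA n + n
        refine ⟨(x, wA n + n), ⟨y - (wA n + n), by omega,
          Or.inr (Or.inl ⟨by omega, by simp; omega⟩)⟩, ⟨n, Or.inl (by rw [hn])⟩⟩
      · exact absurd ⟨n, Or.inl (by rw [hn]; simp; omega)⟩ h
      · -- diagonal move by x - wA d
        have hAd : wA d < wA n := wA_strictMono hgt
        refine ⟨(wA d, wA d + d), ⟨x - wA d, by omega,
          Or.inr (Or.inr ⟨by omega, by omega, by simp; constructor <;> omega⟩)⟩,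
          ⟨d, Or.inl rfl⟩⟩
    · -- x = wA n + n
      have hn0 : 0 < n := by
        rcases Nat.eq_zero_or_pos n with h0 | h0
        · rw [h0, wA_zero] at hn; omega
        · exact h0
      have hAn : wA n < x := by omega
      refine ⟨(x, wA n), ⟨y - wA n, by omega,
        Or.inr (Or.inl ⟨by omega, by simp; omega⟩)⟩, ⟨n, Or.inr (by rw [hn])⟩⟩

lemma move_into_S {p : ℕ × ℕ} (h : p ∉ wS) : ∃ q, wythoffMove p q ∧ q ∈ wS := by
  obtain ⟨x, y⟩ := p
  rcases le_or_gt x y with hxy | hxy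
  · exact move_into_core hxy h
  · have h' : (y, x) ∉ wS := fun hc => h (wS_swap hc)
    obtain ⟨q, hq1, hq2⟩ := move_into_core hxy.le h'
    exact ⟨(q.2, q.1), move_swap hq1, wS_swap (x := q.1) (y := q.2) hq2⟩

lemma ppos_iff_aux : ∀ N, ∀ p : ℕ × ℕ, p.1 + p.2 < N → (PPos wythoffMove p ↔ p ∈ wS) := by
  intro N
  induction N with
  | zero => exact fun p h => absurd h (by omega)
  | succ N ih =>
    intro p hp
    rw [PPos]
    constructor
    · intro h
      by_contra hns
      obtain ⟨q, hq1, hq2⟩ := move_into_S hns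
      have hlt := move_decreases hq1
      exact h q hq1 hlt ((ih q (by omega)).mpr hq2)
    · intro hs q hq hlt hPq
      exact no_move_S hs hq ((ih q (by omega)).mp hPq)

lemma ppos_iff (p : ℕ × ℕ) : PPos wythoffMove p ↔ p ∈ wS :=
  ppos_iff_aux (p.1 + p.2 + 1) p (by omega)

theorem stmt_16 :
    {pos : ℕ × ℕ | PPos wythoffMove pos} =
      {pos : ℕ × ℕ | ∃ n : ℕ, pos = (⌊phi * n⌋₊, ⌊phi ^ 2 * n⌋₊)} ∪
      {pos : ℕ × ℕ | ∃ n : ℕ, pos = (⌊phi ^ 2 * n⌋₊, ⌊phi * n⌋₊)} := by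
  ext p
  rw [Set.mem_setOf_eq, ppos_iff]
  simp only [Set.mem_union, Set.mem_setOf_eq, wS, wB_eq]
  constructor
  · rintro ⟨n, h | h⟩
    · exact Or.inl ⟨n, h⟩
    · exact Or.inr ⟨n, h⟩
  · rintro (⟨n, h⟩ | ⟨n, h⟩)
    · exact ⟨n, Or.inl h⟩
    · exact ⟨n, Or.inr h⟩
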